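/- If G is a connected graph of diameter at most 2 that is not a path, then md(G) = ∞, i.e., G has no m-resolving set. -/
import Mathlib


open SimpleGraph

/-- The multiset of distances from `v` to the vertices of `W`. -/
noncomputable def mrep {V : Type*} (G : SimpleGraph V) (W : Finset V) (v : V) : Multiset ℕ :=
  W.val.map (fun w => G.dist v w)

/-- `W` is an m-resolving set of `G`: distinct vertices have distinct
representation multisets. -/
def IsMResolving {V : Type*} (G : SimpleGraph V) (W : Finset V) : Prop :=
  ∀ u v : V, u ≠ v → mrep G W u ≠ mrep G W v

/-- The multiset dimension of `G`, equal to `⊤` if `G` has no m-resolving set. -/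
noncomputable def mdim {V : Type*} (G : SimpleGraph V) : ℕ∞ :=
  ⨅ W : {W : Finset V // IsMResolving G W}, (W.1.card : ℕ∞)

lemma card_count012 (m : Multiset ℕ) (h : ∀ x ∈ m, x ≤ 2) :
    Multiset.card m = m.count 0 + m.count 1 + m.count 2 := by
  induction m using Multiset.induction with
  | empty => simp
  | cons a s ih =>
    have ha : a ≤ 2 := h a (Multiset.mem_cons_self a s)
    have hs := ih (fun x hx => h x (Multiset.mem_cons_of_mem hx))
    interval_cases a <;> simp [Multiset.count_cons] <;> omega

lemma multiset_eq_of_counts (m₁ m₂ : Multiset ℕ) (h₁ : ∀ x ∈ m₁, x ≤ 2) (h₂ : ∀ x ∈ m₂, x ≤ 2)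
    (hc : Multiset.card m₁ = Multiset.card m₂)
    (h0 : m₁.count 0 = m₂.count 0) (hone : m₁.count 1 = m₂.count 1) : m₁ = m₂ := by
  have e1 := card_count012 m₁ h₁
  have e2 := card_count012 m₂ h₂
  have h2 : m₁.count 2 = m₂.count 2 := by omega
  ext a
  rcases a with _ | _ | _ | n
  · exact h0
  · exact hone
  · exact h2
  · rw [Multiset.count_eq_zero.mpr (fun hm => absurd (h₁ _ hm) (by omega)),
      Multiset.count_eq_zero.mpr (fun hm => absurd (h₂ _ hm) (by omega))]

lemma exists_mid {V : Type*} {G : SimpleGraph V} {u v : V} (hr : G.Reachable u v)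
    (h : G.dist u v = 2) : ∃ x, G.Adj u x ∧ G.Adj x v := by
  obtain ⟨p, hp⟩ := hr.exists_walk_length_eq_dist
  rw [h] at hp
  cases p with
  | nil => simp at hp
  | cons h₁ q =>
    cases q with
    | nil => simp at hp
    | cons h₂ r =>
      cases r with
      | nil => exact ⟨_, h₁, h₂⟩
      | cons h₃ s => simp [SimpleGraph.Walk.length_cons] at hp

lemma iso_path_one {V : Type*} (G : SimpleGraph V) (hs : ∀ u v : V, u = v) (hne : Nonempty V) :
    Nonempty (G ≃g pathGraph 1) := by
  obtain ⟨v0⟩ := hne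
  haveI : Subsingleton V := ⟨hs⟩
  refine ⟨⟨Equiv.ofBijective (fun _ => (0 : Fin 1))
    ⟨fun a b _ => hs a b, fun y => ⟨v0, Subsingleton.elim _ _⟩⟩, ?_⟩⟩
  intro a b
  constructor
  · intro h; exact absurd (Subsingleton.elim _ _) h.ne
  · intro h; exact absurd (hs a b) h.ne

theorem stmt_7 {V : Type*} [Fintype V] (G : SimpleGraph V) (hG : G.Connected)
    (hdiam : G.diam ≤ 2) (hP : ¬ ∃ n : ℕ, Nonempty (G ≃g pathGraph n)) :
    mdim G = ⊤ := by
  classical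
  haveI hnV : Nonempty V := hG.nonempty
  have hne : G.ediam ≠ ⊤ := by
    obtain ⟨p, hp⟩ := Finite.exists_max (fun p : V × V => G.edist p.1 p.2)
    rw [ediam_def]
    exact ne_top_of_le_ne_top (edist_ne_top_iff_reachable.mpr (hG.preconnected p.1 p.2))
      (iSup_le hp)
  have hd2 : ∀ u v : V, G.dist u v ≤ 2 := fun u v => (dist_le_diam hne).trans hdiam
  have hd0 : ∀ u v : V, G.dist u v = 0 ↔ u = v := fun u v => hG.dist_eq_zero_iff
  have main : ∀ W : Finset V, ¬ IsMResolving G W := by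
    intro W hW
    set k := W.card with hk
    have hcard : ∀ v, Multiset.card (mrep G W v) = k := fun v => by simp [mrep, hk]
    have hle2 : ∀ v, ∀ x ∈ mrep G W v, x ≤ 2 := by
      intro v x hx
      rw [mrep, Multiset.mem_map] at hx
      obtain ⟨w, _, rfl⟩ := hx
      exact hd2 v w
    rcases Nat.lt_or_ge k 2 with hk2 | hk2
    · -- small case: k = 0 or 1, G would be a path
      interval_cases k
      · -- k = 0
        have hW0 : W = ∅ := Finset.card_eq_zero.mp hk.symm
        subst hW0
        have hs : ∀ u v : V, u = v := by
          intro u v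
          by_contra h
          exact hW u v h (by simp [mrep])
        exact hP ⟨1, iso_path_one G hs hnV⟩
      · -- k = 1
        obtain ⟨w, hWw⟩ := Finset.card_eq_one.mp hk.symm
        subst hWw
        have hinj1 : ∀ u v : V, G.dist u w = G.dist v w → u = v := by
          intro u v h
          by_contra hne'
          exact hW u v hne' (by simp [mrep, h])
        have hww : G.dist w w = 0 := (hd0 w w).mpr rfl
        by_cases hb : ∃ b, G.dist b w = 2
        · obtain ⟨b, hb2⟩ := hb
          obtain ⟨a, h₁, h₂⟩ := exists_mid (hG.preconnected b w) hb2
          have haw : G.dist a w = 1 := dist_eq_one_iff_adj.mpr h₂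
          have hVcases : ∀ v : V, v = w ∨ v = a ∨ v = b := by
            intro v
            have h := hd2 v w
            have : G.dist v w = 0 ∨ G.dist v w = 1 ∨ G.dist v w = 2 := by omega
            rcases this with h' | h' | h'
            · exact Or.inl (hinj1 v w (by rw [h', hww]))
            · exact Or.inr (Or.inl (hinj1 v a (by rw [h', haw])))
            · exact Or.inr (Or.inr (hinj1 v b (by rw [h', hb2])))
          have hwa : w ≠ a := fun h => by rw [h] at hww haw; omega
          have hwb : w ≠ b := fun h => by rw [h] at hww hb2; omega
          have hab : a ≠ b := fun h => by rw [h] at haw; omega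
          have hnwb : ¬ G.Adj w b := by
            intro h
            have h1 : G.dist b w = 1 := dist_eq_one_iff_adj.mpr h.symm
            rw [h1] at hb2
            omega
          have hf : Function.Bijective
              (fun v : V => (⟨G.dist v w, Nat.lt_succ_of_le (hd2 v w)⟩ : Fin 3)) := by
            refine ⟨fun u v h => hinj1 u v (by simpa using congrArg Fin.val h), ?_⟩
            intro y
            fin_cases y
            · exact ⟨w, by simp [hww]⟩
            · exact ⟨a, by simp [haw]⟩
            · exact ⟨b, by simp [hb2]⟩
          have hnbw : ¬ G.Adj b w := fun h => hnwb h.symm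
          have he : ∀ v : V, ((Equiv.ofBijective _ hf) v : ℕ) = G.dist v w := fun v => rfl
          refine hP ⟨3, ⟨⟨Equiv.ofBijective _ hf, ?_⟩⟩⟩
          intro u v
          rcases hVcases u with rfl | rfl | rfl <;> rcases hVcases v with rfl | rfl | rfl <;>
            simp [pathGraph_adj, he, hww, haw, hb2, h₂, h₂.symm, h₁, h₁.symm,
              hnwb, hnbw, G.irrefl]
        · -- no vertex at distance 2
          have hb1 : ∀ v : V, G.dist v w ≤ 1 := by
            intro v
            have := hd2 v w
            have := hb
            by_contra h
            exact hb ⟨v, by omega⟩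
          by_cases ha : ∃ a, G.dist a w = 1
          · obtain ⟨a, haw⟩ := ha
            have hadj : G.Adj a w := dist_eq_one_iff_adj.mp haw
            have hVcases : ∀ v : V, v = w ∨ v = a := by
              intro v
              have h := hb1 v
              have : G.dist v w = 0 ∨ G.dist v w = 1 := by omega
              rcases this with h' | h'
              · exact Or.inl (hinj1 v w (by rw [h', hww]))
              · exact Or.inr (hinj1 v a (by rw [h', haw]))
            have hwa : w ≠ a := fun h => by rw [h] at hww haw; omega
            have hf : Function.Bijective
                (fun v : V => (⟨G.dist v w, Nat.lt_succ_of_le (hb1 v)⟩ : Fin 2)) := by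
              refine ⟨fun u v h => hinj1 u v (by simpa using congrArg Fin.val h), ?_⟩
              intro y
              fin_cases y
              · exact ⟨w, by simp [hww]⟩
              · exact ⟨a, by simp [haw]⟩
            have he : ∀ v : V, ((Equiv.ofBijective _ hf) v : ℕ) = G.dist v w := fun v => rfl
            refine hP ⟨2, ⟨⟨Equiv.ofBijective _ hf, ?_⟩⟩⟩
            intro u v
            rcases hVcases u with rfl | rfl <;> rcases hVcases v with rfl | rfl <;>
              simp [pathGraph_adj, he, hww, haw, hadj, hadj.symm, G.irrefl]
          · have hs : ∀ u v : V, u = v := by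
              intro u v
              have hu : G.dist u w = 0 := by
                have := hb1 u
                by_contra h
                exact ha ⟨u, by omega⟩
              have hv : G.dist v w = 0 := by
                have := hb1 v
                by_contra h
                exact ha ⟨v, by omega⟩
              exact hinj1 u v (by rw [hu, hv])
            exact hP ⟨1, iso_path_one G hs hnV⟩
    · -- big case: k ≥ 2
      have count_eq : ∀ v n, (mrep G W v).count n
          = (W.filter (fun w => G.dist v w = n)).card := by
        intro v n
        rw [mrep, Multiset.count_map, Finset.card, Finset.filter_val]
        congr 1
        exact Multiset.filter_congr (fun a _ => eq_comm)
      have hcount0 : ∀ u ∈ W, (mrep G W u).count 0 = 1 := by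
        intro u hu
        rw [count_eq]
        have hfe : W.filter (fun a => G.dist u a = 0) = W.filter (fun a => a = u) :=
          Finset.filter_congr (fun a _ => by rw [hd0 u a, eq_comm])
        rw [hfe, Finset.filter_eq' W u, if_pos hu, Finset.card_singleton]
      have hinj : ∀ u ∈ W, ∀ v ∈ W, (mrep G W u).count 1 = (mrep G W v).count 1 → u = v := by
        intro u hu v hv h1
        by_contra hne'
        exact hW u v hne' (multiset_eq_of_counts _ _ (hle2 u) (hle2 v)
          (by rw [hcard, hcard]) (by rw [hcount0 u hu, hcount0 v hv]) h1)
      have hlt : ∀ u ∈ W, (mrep G W u).count 1 < k := by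
        intro u hu
        have h := card_count012 (mrep G W u) (hle2 u)
        rw [hcard, hcount0 u hu] at h
        omega
      set I := W.image (fun u => (mrep G W u).count 1) with hI
      have hIcard : I.card = k := Finset.card_image_of_injOn (fun u hu v hv => hinj u hu v hv)
      have hIsub : I ⊆ Finset.range k := by
        intro n hn
        rw [hI, Finset.mem_image] at hn
        obtain ⟨u, hu, rfl⟩ := hn
        exact Finset.mem_range.mpr (hlt u hu)
      have hIeq : I = Finset.range k :=
        Finset.eq_of_subset_of_card_le hIsub (by rw [hIcard, Finset.card_range])
      have h0mem : (0 : ℕ) ∈ I := by rw [hIeq]; exact Finset.mem_range.mpr (by omega)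
      have hmaxmem : k - 1 ∈ I := by rw [hIeq]; exact Finset.mem_range.mpr (by omega)
      obtain ⟨wmin, hwmin, hwmin1⟩ := Finset.mem_image.mp h0mem
      obtain ⟨wmax, hwmax, hwmax1⟩ := Finset.mem_image.mp hmaxmem
      have hneq : wmax ≠ wmin := by
        intro h
        rw [h, hwmin1] at hwmax1
        omega
      have hc2 : (mrep G W wmax).count 2 = 0 := by
        have h := card_count012 (mrep G W wmax) (hle2 wmax)
        rw [hcard, hcount0 wmax hwmax, hwmax1] at h
        omega
      have hdm : G.dist wmax wmin = 1 := by
        have h2' : G.dist wmax wmin ≠ 2 := by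
          intro h
          exact Multiset.count_eq_zero.mp hc2 (Multiset.mem_map.mpr ⟨wmin, by simpa using hwmin, h⟩)
        have h0' : G.dist wmax wmin ≠ 0 := fun h => hneq ((hd0 _ _).mp h)
        have := hd2 wmax wmin
        omega
      have : (1 : ℕ) ∈ mrep G W wmin :=
        Multiset.mem_map.mpr ⟨wmax, by simpa using hwmax, by rw [SimpleGraph.dist_comm]; exact hdm⟩
      exact Multiset.count_eq_zero.mp hwmin1 this
  haveI : IsEmpty {W : Finset V // IsMResolving G W} := ⟨fun x => main x.1 x.2⟩
  simp only [mdim]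
  exact iInf_of_empty _
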